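/- ∫_0^∞ ∫_0^∞ x⁵ y / (1 + x² + y² + x² y² + x⁴)^4 dx dy = (−9 + 2√3 π)/648. -/

import Mathlib

open MeasureTheory Real Filter Topology

/-- Inner integral in `y`. -/
lemma quad16_inner (x : ℝ) (hx : 0 < x) :
    ∫ y in Set.Ioi (0:ℝ), x ^ 5 * y / (1 + x ^ 2 + y ^ 2 + x ^ 2 * y ^ 2 + x ^ 4) ^ 4
      = x ^ 5 / (6 * (1 + x ^ 2) * (1 + x ^ 2 + x ^ 4) ^ 3) := by
  set g : ℝ → ℝ := fun y => -x ^ 5 / (6 * (1 + x ^ 2) * (1 + x ^ 2 + y ^ 2 + x ^ 2 * y ^ 2 + x ^ 4) ^ 3) with hg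
  have hD : ∀ y : ℝ, 0 < 1 + x ^ 2 + y ^ 2 + x ^ 2 * y ^ 2 + x ^ 4 := fun y => by positivity
  have hderiv : ∀ y ∈ Set.Ici (0:ℝ), HasDerivAt g
      (x ^ 5 * y / (1 + x ^ 2 + y ^ 2 + x ^ 2 * y ^ 2 + x ^ 4) ^ 4) y := by
    intro y _
    have hsq : HasDerivAt (fun y : ℝ => y ^ 2) (2 * y) y := by
      simpa using hasDerivAt_pow 2 y
    have h1 : HasDerivAt (fun y : ℝ => 1 + x ^ 2 + y ^ 2 + x ^ 2 * y ^ 2 + x ^ 4)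
        (2 * y + x ^ 2 * (2 * y)) y :=
      (((hsq.const_add (1 + x ^ 2)).add (hsq.const_mul (x ^ 2))).add_const (x ^ 4))
    have h2 := ((h1.pow 3).const_mul (6 * (1 + x ^ 2)))
    have h3 := (hasDerivAt_const y (-x ^ 5)).div h2 (by
      have := hD y; simp only [Pi.pow_apply]; positivity)
    refine h3.congr_deriv ?_
    have hDy := hD y
    simp only [Pi.pow_apply]
    field_simp
    ring
  have hpos : ∀ y ∈ Set.Ioi (0:ℝ),
      0 ≤ x ^ 5 * y / (1 + x ^ 2 + y ^ 2 + x ^ 2 * y ^ 2 + x ^ 4) ^ 4 := by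
    intro y hy
    have := hD y
    have hy' := Set.mem_Ioi.1 hy
    positivity
  have htop : Tendsto g atTop (𝓝 0) := by
    apply Tendsto.div_atTop (tendsto_const_nhds)
    apply tendsto_atTop_mono (fun y : ℝ => ?_) (tendsto_pow_atTop (n := 2) two_ne_zero)
    have := hD y
    have hD1 : (1:ℝ) ≤ 1 + x ^ 2 + y ^ 2 + x ^ 2 * y ^ 2 + x ^ 4 := by nlinarith [sq_nonneg x, sq_nonneg y, sq_nonneg (x*y), sq_nonneg (x^2)]
    have h2 : (1 + x ^ 2 + y ^ 2 + x ^ 2 * y ^ 2 + x ^ 4) ≤ (1 + x ^ 2 + y ^ 2 + x ^ 2 * y ^ 2 + x ^ 4) ^ 3 :=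
      le_self_pow₀ hD1 (by norm_num)
    nlinarith [sq_nonneg x, sq_nonneg y, sq_nonneg (x*y), pow_pos (hD y) 3]
  have := integral_Ioi_of_hasDerivAt_of_nonneg' hderiv hpos htop
  rw [this, hg]
  have h0 : (0:ℝ) < 1 + x ^ 2 + x ^ 4 := by positivity
  have h1 : (0:ℝ) < 1 + x ^ 2 := by positivity
  simp only
  field_simp
  ring

lemma quad16_q_pos (x : ℝ) : (0:ℝ) < 1 + x ^ 2 + x ^ 4 := by positivity

lemma quad16_s_pos : (0:ℝ) < Real.sqrt 3 := Real.sqrt_pos.2 (by norm_num)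

lemma quad16_s_sq : Real.sqrt 3 ^ 2 = 3 := Real.sq_sqrt (by norm_num)

/-- Antiderivative for the outer integral. -/
noncomputable def quad16_H (x : ℝ) : ℝ :=
  (1/12) * Real.log (1 + x ^ 2) - (1/24) * Real.log (1 + x ^ 2 + x ^ 4)
    + (1 - x ^ 2) / (36 * (1 + x ^ 2 + x ^ 4))
    - (2 * x ^ 2 + 1) / (72 * (1 + x ^ 2 + x ^ 4) ^ 2)
    + (Real.sqrt 3 / 108) * Real.arctan ((2 * x ^ 2 + 1) / Real.sqrt 3)

lemma quad16_H_deriv (x : ℝ) :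
    HasDerivAt quad16_H (x ^ 5 / (6 * (1 + x ^ 2) * (1 + x ^ 2 + x ^ 4) ^ 3)) x := by
  have hq := quad16_q_pos x
  have hp : (0:ℝ) < 1 + x ^ 2 := by positivity
  have hs := quad16_s_pos
  have hs2 := quad16_s_sq
  have hsq : HasDerivAt (fun x : ℝ => x ^ 2) (2 * x) x := by simpa using hasDerivAt_pow 2 x
  have hx4 : HasDerivAt (fun x : ℝ => x ^ 4) (4 * x ^ 3) x := by simpa using hasDerivAt_pow 4 x
  have hP : HasDerivAt (fun x : ℝ => 1 + x ^ 2) (2 * x) x := hsq.const_add 1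
  have hQ : HasDerivAt (fun x : ℝ => 1 + x ^ 2 + x ^ 4) (2 * x + 4 * x ^ 3) x :=
    (hsq.const_add 1).add hx4
  -- pieces
  have h1 : HasDerivAt (fun x : ℝ => (1/12) * Real.log (1 + x ^ 2))
      ((1/12) * (2 * x / (1 + x ^ 2))) x := (hP.log hp.ne').const_mul _
  have h2 : HasDerivAt (fun x : ℝ => (1/24) * Real.log (1 + x ^ 2 + x ^ 4))
      ((1/24) * ((2 * x + 4 * x ^ 3) / (1 + x ^ 2 + x ^ 4))) x := (hQ.log hq.ne').const_mul _
  have h3 : HasDerivAt (fun x : ℝ => (1 - x ^ 2) / (36 * (1 + x ^ 2 + x ^ 4)))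
      ((-(2 * x) * (36 * (1 + x ^ 2 + x ^ 4)) - (1 - x ^ 2) * (36 * (2 * x + 4 * x ^ 3)))
        / (36 * (1 + x ^ 2 + x ^ 4)) ^ 2) x := by
    have hnum : HasDerivAt (fun x : ℝ => 1 - x ^ 2) (-(2 * x)) x := by
      exact hsq.const_sub 1
    exact hnum.div (hQ.const_mul 36) (by positivity)
  have h4 : HasDerivAt (fun x : ℝ => (2 * x ^ 2 + 1) / (72 * (1 + x ^ 2 + x ^ 4) ^ 2))
      ((2 * (2 * x) * (72 * (1 + x ^ 2 + x ^ 4) ^ 2)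
          - (2 * x ^ 2 + 1) * (72 * (2 * (1 + x ^ 2 + x ^ 4) * (2 * x + 4 * x ^ 3))))
        / (72 * (1 + x ^ 2 + x ^ 4) ^ 2) ^ 2) x := by
    have hnum : HasDerivAt (fun x : ℝ => 2 * x ^ 2 + 1) (2 * (2 * x)) x :=
      (hsq.const_mul 2).add_const 1
    have hden : HasDerivAt (fun x : ℝ => 72 * (1 + x ^ 2 + x ^ 4) ^ 2)
        (72 * (2 * (1 + x ^ 2 + x ^ 4) * (2 * x + 4 * x ^ 3))) x := by
      have := hQ.pow 2
      simpa [mul_comm, mul_assoc, mul_left_comm] using this.const_mul (72:ℝ)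
    exact hnum.div hden (by positivity)
  have h5 : HasDerivAt (fun x : ℝ => (Real.sqrt 3 / 108) * Real.arctan ((2 * x ^ 2 + 1) / Real.sqrt 3))
      (x / (36 * (1 + x ^ 2 + x ^ 4))) x := by
    have hu : HasDerivAt (fun x : ℝ => (2 * x ^ 2 + 1) / Real.sqrt 3)
        (2 * (2 * x) / Real.sqrt 3) x := ((hsq.const_mul 2).add_const 1).div_const _
    have ha := (Real.hasDerivAt_arctan ((2 * x ^ 2 + 1) / Real.sqrt 3)).comp x hu
    have := ha.const_mul (Real.sqrt 3 / 108)
    refine this.congr_deriv ?_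
    have hkey : 1 + ((2 * x ^ 2 + 1) / Real.sqrt 3) ^ 2 = 4 * (1 + x ^ 2 + x ^ 4) / 3 := by
      rw [div_pow, hs2]; field_simp; ring
    rw [hkey]
    field_simp
    ring
  have := ((((h1.sub h2).add h3).sub h4).add h5)
  refine this.congr_deriv ?_
  field_simp
  ring

lemma quad16_tendsto_H : Tendsto quad16_H atTop (𝓝 (Real.sqrt 3 * Real.pi / 216)) := by
  have hinv : Tendsto (fun x : ℝ => x⁻¹) atTop (𝓝 0) := tendsto_inv_atTop_zero
  -- log part
  have t1 : Tendsto (fun x : ℝ => (1/12) * Real.log (1 + x ^ 2)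
      - (1/24) * Real.log (1 + x ^ 2 + x ^ 4)) atTop (𝓝 0) := by
    have heq : ∀ x : ℝ, (1/12) * Real.log (1 + x ^ 2) - (1/24) * Real.log (1 + x ^ 2 + x ^ 4)
        = (1/24) * Real.log ((1 + x ^ 2) ^ 2 / (1 + x ^ 2 + x ^ 4)) := by
      intro x
      have hp : (0:ℝ) < 1 + x ^ 2 := by positivity
      have hq := quad16_q_pos x
      rw [Real.log_div (by positivity) hq.ne', Real.log_pow]
      push_cast; ring
    have hr : Tendsto (fun x : ℝ => (1 + x ^ 2) ^ 2 / (1 + x ^ 2 + x ^ 4)) atTop (𝓝 1) := by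
      have heq2 : ∀ x : ℝ, (1 + x ^ 2) ^ 2 / (1 + x ^ 2 + x ^ 4) = 1 + x ^ 2 / (1 + x ^ 2 + x ^ 4) := by
        intro x
        have hq := quad16_q_pos x
        field_simp; ring
      have h0 : Tendsto (fun x : ℝ => x ^ 2 / (1 + x ^ 2 + x ^ 4)) atTop (𝓝 0) := by
        apply squeeze_zero_norm' (a := fun x : ℝ => x⁻¹) ?_ hinv
        filter_upwards [eventually_ge_atTop (1:ℝ)] with x hx
        have hx0 : (0:ℝ) < x := by linarith
        have hq := quad16_q_pos x
        rw [Real.norm_eq_abs, abs_of_nonneg (by positivity), inv_eq_one_div,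
          div_le_div_iff₀ hq hx0]
        nlinarith [sq_nonneg x, pow_pos hx0 4]
      simpa [heq2] using (tendsto_const_nhds.add h0 : Tendsto (fun x : ℝ => 1 + x ^ 2 / (1 + x ^ 2 + x ^ 4)) atTop (𝓝 (1 + 0)))
    have := ((Real.continuousAt_log one_ne_zero).tendsto.comp hr).const_mul (1/24 : ℝ)
    simp only [Real.log_one, mul_zero] at this
    exact Tendsto.congr (fun x => (heq x).symm) this
  -- rational parts
  have t2 : Tendsto (fun x : ℝ => (1 - x ^ 2) / (36 * (1 + x ^ 2 + x ^ 4))) atTop (𝓝 0) := by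
    apply squeeze_zero_norm' (a := fun x : ℝ => x⁻¹) ?_ hinv
    filter_upwards [eventually_ge_atTop (1:ℝ)] with x hx
    have hx0 : (0:ℝ) < x := by linarith
    have hq := quad16_q_pos x
    rw [Real.norm_eq_abs, abs_div, abs_of_pos (by positivity : (0:ℝ) < 36 * (1 + x ^ 2 + x ^ 4)),
      abs_of_nonpos (by nlinarith : (1 - x ^ 2 : ℝ) ≤ 0), inv_eq_one_div,
      div_le_div_iff₀ (by positivity) hx0]
    nlinarith [pow_pos hx0 4, sq_nonneg x]
  have t3 : Tendsto (fun x : ℝ => (2 * x ^ 2 + 1) / (72 * (1 + x ^ 2 + x ^ 4) ^ 2)) atTop (𝓝 0) := by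
    apply squeeze_zero_norm' (a := fun x : ℝ => x⁻¹) ?_ hinv
    filter_upwards [eventually_ge_atTop (1:ℝ)] with x hx
    have hx0 : (0:ℝ) < x := by linarith
    have hq := quad16_q_pos x
    rw [Real.norm_eq_abs, abs_of_nonneg (by positivity), inv_eq_one_div,
      div_le_div_iff₀ (by positivity) hx0]
    nlinarith [pow_pos hx0 4, sq_nonneg x, sq_nonneg (x ^ 2), sq_nonneg (x ^ 4), pow_pos hx0 6]
  have t4 : Tendsto (fun x : ℝ => (Real.sqrt 3 / 108) * Real.arctan ((2 * x ^ 2 + 1) / Real.sqrt 3))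
      atTop (𝓝 (Real.sqrt 3 / 108 * (Real.pi / 2))) := by
    have hu : Tendsto (fun x : ℝ => (2 * x ^ 2 + 1) / Real.sqrt 3) atTop atTop := by
      apply Tendsto.atTop_div_const quad16_s_pos
      apply tendsto_atTop_add_const_right
      exact (tendsto_pow_atTop (two_ne_zero)).const_mul_atTop (by norm_num)
    have := (Real.tendsto_arctan_atTop.mono_right nhdsWithin_le_nhds).comp hu
    exact this.const_mul _
  have := (((t1.add t2).sub t3).add t4)
  have hL : (0 : ℝ) + 0 - 0 + Real.sqrt 3 / 108 * (Real.pi / 2) = Real.sqrt 3 * Real.pi / 216 := by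
    ring
  rw [hL] at this
  exact this.congr (fun x => by simp [quad16_H])

theorem quadrant_integral_16 :
    ∫ x in Set.Ioi (0:ℝ), ∫ y in Set.Ioi (0:ℝ), x ^ 5 * y / (1 + x ^ 2 + y ^ 2 + x ^ 2 * y ^ 2 + x ^ 4) ^ 4 = (-9 + 2 * Real.sqrt 3 * Real.pi) / 648 := by
  rw [MeasureTheory.setIntegral_congr_fun measurableSet_Ioi
    (fun x hx => quad16_inner x (Set.mem_Ioi.1 hx))]
  have hderiv : ∀ x ∈ Set.Ici (0:ℝ),
      HasDerivAt quad16_H (x ^ 5 / (6 * (1 + x ^ 2) * (1 + x ^ 2 + x ^ 4) ^ 3)) x :=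
    fun x _ => quad16_H_deriv x
  have hpos : ∀ x ∈ Set.Ioi (0:ℝ),
      (0:ℝ) ≤ x ^ 5 / (6 * (1 + x ^ 2) * (1 + x ^ 2 + x ^ 4) ^ 3) := by
    intro x hx
    have hx' := Set.mem_Ioi.1 hx
    positivity
  rw [integral_Ioi_of_hasDerivAt_of_nonneg' hderiv hpos quad16_tendsto_H]
  have harctan : Real.arctan ((2 * (0:ℝ) ^ 2 + 1) / Real.sqrt 3) = Real.pi / 6 := by
    have hpi := Real.pi_pos
    rw [show ((2 * (0:ℝ) ^ 2 + 1) / Real.sqrt 3) = 1 / Real.sqrt 3 by norm_num,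
      ← Real.tan_pi_div_six, Real.arctan_tan (by linarith) (by linarith)]
  have h0 : quad16_H 0 = 1/72 + Real.sqrt 3 * Real.pi / 648 := by
    rw [quad16_H, harctan]
    norm_num
    ring
  rw [h0]
  ring
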